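/- Let p > 1. For all δ ≥ 0, all d ≥ 1 and every real d×d matrix P one has the exact identity S(P):P = |F(P)|², and there exist constants c, C > 0 depending only on p such that c·φ(|P^sym|) ≤ S(P):P ≤ C·φ(|P^sym|), where φ(t) = ∫₀^t (δ+s)^{p−2}·s ds. -/

import Mathlib

open Matrix

/-- Symmetric part `P^sym = (P + Pᵀ)/2` of a square matrix. -/
noncomputable def msym {d : ℕ} (P : Matrix (Fin d) (Fin d) ℝ) : Matrix (Fin d) (Fin d) ℝ :=
  (2⁻¹ : ℝ) • (P + Pᵀ)

/-- Frobenius inner product `A:B = ∑ᵢⱼ Aᵢⱼ Bᵢⱼ`. -/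
noncomputable def mdot {d : ℕ} (A B : Matrix (Fin d) (Fin d) ℝ) : ℝ :=
  ∑ i, ∑ j, A i j * B i j

/-- Frobenius norm `|A| = (A:A)^(1/2)`. -/
noncomputable def mnorm {d : ℕ} (A : Matrix (Fin d) (Fin d) ℝ) : ℝ :=
  Real.sqrt (mdot A A)

/-- Stress tensor `S(P) = (δ + |P^sym|)^(p-2) • P^sym` (real power, `0^r = 0` for `r < 0`). -/
noncomputable def Smap (p δ : ℝ) {d : ℕ} (P : Matrix (Fin d) (Fin d) ℝ) :
    Matrix (Fin d) (Fin d) ℝ :=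
  ((δ + mnorm (msym P)) ^ (p - 2)) • msym P

/-- Associated function `F(P) = (δ + |P^sym|)^((p-2)/2) • P^sym`. -/
noncomputable def Fmap (p δ : ℝ) {d : ℕ} (P : Matrix (Fin d) (Fin d) ℝ) :
    Matrix (Fin d) (Fin d) ℝ :=
  ((δ + mnorm (msym P)) ^ ((p - 2) / 2)) • msym P


lemma mdot_self_nonneg {d : ℕ} (A : Matrix (Fin d) (Fin d) ℝ) : 0 ≤ mdot A A :=
  Finset.sum_nonneg fun _ _ => Finset.sum_nonneg fun _ _ => mul_self_nonneg _

lemma mnorm_nonneg {d : ℕ} (A : Matrix (Fin d) (Fin d) ℝ) : 0 ≤ mnorm A := Real.sqrt_nonneg _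

lemma mnorm_sq {d : ℕ} (A : Matrix (Fin d) (Fin d) ℝ) : mnorm A ^ 2 = mdot A A :=
  Real.sq_sqrt (mdot_self_nonneg A)

lemma mdot_smul_left {d : ℕ} (r : ℝ) (A B : Matrix (Fin d) (Fin d) ℝ) :
    mdot (r • A) B = r * mdot A B := by
  simp [mdot, Finset.mul_sum, Matrix.smul_apply, smul_eq_mul, mul_assoc]

lemma mdot_smul_right {d : ℕ} (r : ℝ) (A B : Matrix (Fin d) (Fin d) ℝ) :
    mdot A (r • B) = r * mdot A B := by
  simp [mdot, Finset.mul_sum, Matrix.smul_apply, smul_eq_mul]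
  congr 1; ext i; congr 1; ext j; ring

lemma msym_symm {d : ℕ} (P : Matrix (Fin d) (Fin d) ℝ) (i j : Fin d) :
    msym P i j = msym P j i := by
  simp [msym, Matrix.add_apply, Matrix.transpose_apply, Matrix.smul_apply]
  ring

lemma mdot_msym {d : ℕ} (P : Matrix (Fin d) (Fin d) ℝ) :
    mdot (msym P) P = mdot (msym P) (msym P) := by
  have hT : mdot (msym P) Pᵀ = mdot (msym P) P := by
    unfold mdot
    rw [Finset.sum_comm]
    exact Finset.sum_congr rfl fun i _ => Finset.sum_congr rfl fun j _ => by
      rw [Matrix.transpose_apply, msym_symm]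
  have hadd : mdot (msym P) (P + Pᵀ) = mdot (msym P) P + mdot (msym P) Pᵀ := by
    simp [mdot, Matrix.add_apply, mul_add, Finset.sum_add_distrib]
  calc mdot (msym P) P = 2⁻¹ * (mdot (msym P) P + mdot (msym P) Pᵀ) := by
        rw [hT]; ring
    _ = mdot (msym P) (msym P) := by
        rw [show mdot (msym P) (msym P) = mdot (msym P) ((2⁻¹:ℝ) • (P + Pᵀ)) from rfl,
          mdot_smul_right, hadd]

open intervalIntegral MeasureTheory Set

lemma intF {p δ a b : ℝ} (h : ∀ x ∈ Set.uIcc a b, δ + x ≠ 0 ∨ (0:ℝ) ≤ p - 2) :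
    IntervalIntegrable (fun s => (δ + s) ^ (p - 2) * s) volume a b :=
  (((continuousOn_const.add continuousOn_id).rpow_const h).mul continuousOn_id).intervalIntegrable

lemma phi_nonneg {p δ t : ℝ} (hδ : 0 ≤ δ) (ht : 0 ≤ t) :
    0 ≤ ∫ s in (0:ℝ)..t, (δ + s) ^ (p - 2) * s :=
  intervalIntegral.integral_nonneg ht fun x hx =>
    mul_nonneg (Real.rpow_nonneg (by linarith [hx.1]) _) hx.1

lemma rpow_two_eq : (2:ℝ) ^ (2:ℝ) = 4 := by
  have e := Real.rpow_natCast (2:ℝ) 2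
  rw [Nat.cast_ofNat] at e
  rw [e]; norm_num

lemma phi_key (p : ℝ) (hp : 1 < p) : ∃ c : ℝ, 0 < c ∧ ∃ C : ℝ, 0 < C ∧
    ∀ δ : ℝ, 0 ≤ δ → ∀ t : ℝ, 0 ≤ t →
      c * (∫ s in (0:ℝ)..t, (δ + s) ^ (p - 2) * s) ≤ (δ + t) ^ (p - 2) * t ^ 2 ∧
      (δ + t) ^ (p - 2) * t ^ 2 ≤ C * ∫ s in (0:ℝ)..t, (δ + s) ^ (p - 2) * s := by
  rcases le_or_gt 2 p with hp2 | hp2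
  · -- p ≥ 2 : c = 1, C = 2^p
    refine ⟨1, one_pos, (2:ℝ) ^ p, Real.rpow_pos_of_pos two_pos p, fun δ hδ t ht => ?_⟩
    have hS0 : 0 ≤ (δ + t) ^ (p - 2) * t ^ 2 :=
      mul_nonneg (Real.rpow_nonneg (by linarith) _) (sq_nonneg t)
    have hint : ∀ a b : ℝ, IntervalIntegrable (fun s => (δ + s) ^ (p - 2) * s) volume a b :=
      fun a b => intF fun x _ => Or.inr (by linarith)
    constructor
    · have hmono : (∫ s in (0:ℝ)..t, (δ + s) ^ (p - 2) * s)
          ≤ ∫ s in (0:ℝ)..t, (δ + t) ^ (p - 2) * s := by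
        apply intervalIntegral.integral_mono_on ht (hint 0 t)
          ((continuous_const.mul continuous_id).intervalIntegrable 0 t)
        intro x hx
        exact mul_le_mul_of_nonneg_right
          (Real.rpow_le_rpow (by linarith [hx.1]) (by linarith [hx.2]) (by linarith)) hx.1
      rw [intervalIntegral.integral_const_mul, integral_id] at hmono
      nlinarith
    · have hsplit : (∫ s in (0:ℝ)..(t/2), (δ + s) ^ (p - 2) * s)
          + (∫ s in (t/2)..t, (δ + s) ^ (p - 2) * s)
          = ∫ s in (0:ℝ)..t, (δ + s) ^ (p - 2) * s :=
        intervalIntegral.integral_add_adjacent_intervals (hint 0 (t/2)) (hint (t/2) t)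
      have h1 : 0 ≤ ∫ s in (0:ℝ)..(t/2), (δ + s) ^ (p - 2) * s :=
        intervalIntegral.integral_nonneg (by linarith) fun x hx =>
          mul_nonneg (Real.rpow_nonneg (by linarith [hx.1]) _) hx.1
      have h2 : (∫ s in (t/2)..t, ((δ + t/2) ^ (p - 2) * (t/2)))
          ≤ ∫ s in (t/2)..t, (δ + s) ^ (p - 2) * s := by
        apply intervalIntegral.integral_mono_on (by linarith)
          (intervalIntegrable_const) (hint (t/2) t)
        intro x hx
        exact mul_le_mul
          (Real.rpow_le_rpow (by linarith) (by linarith [hx.1]) (by linarith))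
          hx.1 (by linarith) (Real.rpow_nonneg (by linarith [hx.1]) _)
      rw [intervalIntegral.integral_const, smul_eq_mul] at h2
      have h3 : (δ + t) ^ (p - 2) ≤ 2 ^ (p - 2) * (δ + t/2) ^ (p - 2) := by
        rw [← Real.mul_rpow (by norm_num) (by linarith)]
        exact Real.rpow_le_rpow (by linarith) (by linarith) (by linarith)
      have h4 : (2:ℝ) ^ p = 2 ^ (p - 2) * 4 := by
        rw [← rpow_two_eq, ← Real.rpow_add two_pos]
        congr 1
        ring
      have hLB : (t/2) * ((δ + t/2) ^ (p - 2) * (t/2))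
          ≤ ∫ s in (0:ℝ)..t, (δ + s) ^ (p - 2) * s := by
        have : t - t/2 = t/2 := by ring
        rw [this] at h2
        linarith
      have hint1 := mul_le_mul_of_nonneg_right h3 (sq_nonneg t)
      have hint2 := mul_le_mul_of_nonneg_left hLB
        (le_of_lt (Real.rpow_pos_of_pos two_pos p))
      have heq : 2 ^ (p - 2) * (δ + t/2) ^ (p - 2) * t ^ 2
          = 2 ^ p * ((t/2) * ((δ + t/2) ^ (p - 2) * (t/2))) := by
        rw [h4]; ring
      linarith
  · -- 1 < p < 2 : c = p * 2^(p-2), C = p + 2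
    have h2ppos : (0:ℝ) < 2 ^ (p - 2) := Real.rpow_pos_of_pos two_pos _
    refine ⟨p * 2 ^ (p - 2), by positivity, p + 2, by linarith, fun δ hδ t ht => ?_⟩
    have hI0 : 0 ≤ ∫ s in (0:ℝ)..t, (δ + s) ^ (p - 2) * s := phi_nonneg hδ ht
    have hp0 : (0:ℝ) < p := by linarith
    rcases eq_or_lt_of_le hδ with hδ0 | hδ0
    · -- δ = 0 : exact computation
      subst hδ0
      have hIeq : (∫ s in (0:ℝ)..t, ((0:ℝ) + s) ^ (p - 2) * s) = t ^ p / p := by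
        have hEq : Set.EqOn (fun s : ℝ => ((0:ℝ) + s) ^ (p - 2) * s)
            (fun s : ℝ => s ^ (p - 1)) (Set.uIcc 0 t) := by
          intro x hx
          rw [Set.uIcc_of_le ht] at hx
          simp only [zero_add]
          rcases eq_or_lt_of_le hx.1 with h0 | h0
          · rw [← h0]
            simp [Real.zero_rpow (show p - 1 ≠ 0 by intro h; linarith)]
          · calc x ^ (p - 2) * x = x ^ (p - 2) * x ^ (1:ℝ) := by rw [Real.rpow_one]
              _ = x ^ (p - 2 + 1) := (Real.rpow_add h0 _ _).symm
              _ = x ^ (p - 1) := by rw [show p - 2 + 1 = p - 1 by ring]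
        rw [intervalIntegral.integral_congr hEq, integral_rpow (Or.inl (by linarith)),
          Real.zero_rpow (show p - 1 + 1 ≠ 0 by intro h; linarith),
          show p - 1 + 1 = p by ring]
        ring
      have hSeq : ((0:ℝ) + t) ^ (p - 2) * t ^ 2 = t ^ p := by
        rw [zero_add]
        rcases eq_or_lt_of_le ht with h0 | h0
        · rw [← h0]
          simp [Real.zero_rpow (show p ≠ 0 by linarith),
            Real.zero_rpow (show p - 2 ≠ 0 by intro h; linarith)]
        · rw [← Real.rpow_natCast t 2, ← Real.rpow_add h0]
          norm_num
      rw [hIeq, hSeq]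
      have h1 : (2:ℝ) ^ (p - 2) ≤ 1 :=
        Real.rpow_le_one_of_one_le_of_nonpos one_le_two (by linarith)
      have h2 : 0 ≤ t ^ p := Real.rpow_nonneg ht p
      constructor
      · have heq : p * 2 ^ (p - 2) * (t ^ p / p) = 2 ^ (p - 2) * t ^ p := by
          field_simp
        rw [heq]
        nlinarith [mul_le_mul_of_nonneg_right h1 h2]
      · have heq : (p + 2) * (t ^ p / p) - t ^ p = (2 / p) * t ^ p := by
          field_simp; ring
        have : 0 ≤ (2 / p) * t ^ p := by positivity
        linarith
    rcases eq_or_lt_of_le ht with ht0 | ht0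
    · subst ht0
      simp
    have hintI : IntervalIntegrable (fun s => (δ + s) ^ (p - 2) * s) volume 0 t :=
      intF fun x hx => Or.inl (by
        rw [Set.uIcc_of_le ht] at hx
        have := hx.1; positivity)
    have hS0 : 0 ≤ (δ + t) ^ (p - 2) * t ^ 2 :=
      mul_nonneg (Real.rpow_nonneg (by linarith) _) (sq_nonneg t)
    have hCside : (δ + t) ^ (p - 2) * t ^ 2
        ≤ (p + 2) * ∫ s in (0:ℝ)..t, (δ + s) ^ (p - 2) * s := by
      have hmono : (∫ s in (0:ℝ)..t, (δ + t) ^ (p - 2) * s)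
          ≤ ∫ s in (0:ℝ)..t, (δ + s) ^ (p - 2) * s := by
        apply intervalIntegral.integral_mono_on ht
          ((continuous_const.mul continuous_id).intervalIntegrable 0 t) hintI
        intro x hx
        exact mul_le_mul_of_nonneg_right
          (Real.rpow_le_rpow_of_nonpos (by linarith [hx.1]) (by linarith [hx.2])
            (by linarith)) hx.1
      rw [intervalIntegral.integral_const_mul, integral_id] at hmono
      nlinarith
    refine ⟨?_, hCside⟩
    rcases le_total t δ with htδ | htδ
    · -- t ≤ δ
      have hmono : (∫ s in (0:ℝ)..t, (δ + s) ^ (p - 2) * s)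
          ≤ ∫ s in (0:ℝ)..t, δ ^ (p - 2) * s := by
        apply intervalIntegral.integral_mono_on ht hintI
          ((continuous_const.mul continuous_id).intervalIntegrable 0 t)
        intro x hx
        exact mul_le_mul_of_nonneg_right
          (Real.rpow_le_rpow_of_nonpos hδ0 (by linarith [hx.1]) (by linarith)) hx.1
      rw [intervalIntegral.integral_const_mul, integral_id] at hmono
      have h3 : 2 ^ (p - 2) * δ ^ (p - 2) ≤ (δ + t) ^ (p - 2) := by
        rw [← Real.mul_rpow (by norm_num) (by linarith)]
        exact Real.rpow_le_rpow_of_nonpos (by linarith) (by linarith) (by linarith)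
      have hA := mul_le_mul_of_nonneg_left hmono
        (show (0:ℝ) ≤ p * 2 ^ (p - 2) by positivity)
      have hB := mul_le_mul_of_nonneg_right h3 (sq_nonneg t)
      have hB2 := mul_le_mul_of_nonneg_left hB (show (0:ℝ) ≤ p / 2 by linarith)
      nlinarith
    · -- δ ≤ t
      have hmono : (∫ s in (0:ℝ)..t, (δ + s) ^ (p - 2) * s)
          ≤ ∫ s in (0:ℝ)..t, s ^ (p - 1) := by
        apply intervalIntegral.integral_mono_on ht hintI
          (intervalIntegral.intervalIntegrable_rpow' (by linarith))
        intro x hx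
        rcases eq_or_lt_of_le hx.1 with hx0 | hx0
        · rw [← hx0]
          simp [Real.zero_rpow (show p - 1 ≠ 0 by intro h; linarith)]
        · have hle : (δ + x) ^ (p - 2) ≤ x ^ (p - 2) :=
            Real.rpow_le_rpow_of_nonpos hx0 (by linarith) (by linarith)
          calc (δ + x) ^ (p - 2) * x ≤ x ^ (p - 2) * x :=
                mul_le_mul_of_nonneg_right hle hx.1
            _ = x ^ (p - 2) * x ^ (1:ℝ) := by rw [Real.rpow_one]
            _ = x ^ (p - 2 + 1) := (Real.rpow_add hx0 _ _).symm
            _ = x ^ (p - 1) := by rw [show p - 2 + 1 = p - 1 by ring]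
      rw [integral_rpow (Or.inl (by linarith)),
        Real.zero_rpow (show p - 1 + 1 ≠ 0 by intro h; linarith),
        show p - 1 + 1 = p by ring, sub_zero] at hmono
      have hmono' : (∫ s in (0:ℝ)..t, (δ + s) ^ (p - 2) * s) ≤ t ^ p / p := by
        linarith
      have h3 : 2 ^ (p - 2) * t ^ (p - 2) ≤ (δ + t) ^ (p - 2) := by
        rw [← Real.mul_rpow (by norm_num) (by linarith)]
        exact Real.rpow_le_rpow_of_nonpos (by linarith) (by linarith) (by linarith)
      have htp : t ^ (p - 2) * t ^ 2 = t ^ p := by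
        rw [← Real.rpow_natCast t 2, ← Real.rpow_add ht0]
        norm_num
      have hA := mul_le_mul_of_nonneg_left hmono'
        (show (0:ℝ) ≤ p * 2 ^ (p - 2) by positivity)
      have heq1 : p * 2 ^ (p - 2) * (t ^ p / p) = 2 ^ (p - 2) * t ^ p := by
        field_simp
      have heq2 : 2 ^ (p - 2) * t ^ p = 2 ^ (p - 2) * t ^ (p - 2) * t ^ 2 := by
        rw [← htp]; ring
      have hB := mul_le_mul_of_nonneg_right h3 (sq_nonneg t)
      linarith

/-- For `p > 1`: for all `δ ≥ 0`, `d ≥ 1` and all real `d×d` matrices `P` one has the exact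
identity `S(P):P = |F(P)|²`, and there are constants `c, C > 0` depending only on `p` with
`c * φ(|P^sym|) ≤ S(P):P ≤ C * φ(|P^sym|)`, where `φ(t) = ∫₀ᵗ (δ+s)^(p-2) * s ds`. -/
theorem stmt9 (p : ℝ) (hp : 1 < p) :
    (∀ δ : ℝ, 0 ≤ δ → ∀ d : ℕ, 1 ≤ d → ∀ P : Matrix (Fin d) (Fin d) ℝ,
      mdot (Smap p δ P) P = mnorm (Fmap p δ P) ^ 2) ∧
    ∃ c : ℝ, 0 < c ∧ ∃ C : ℝ, 0 < C ∧
      ∀ δ : ℝ, 0 ≤ δ → ∀ d : ℕ, 1 ≤ d → ∀ P : Matrix (Fin d) (Fin d) ℝ,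
        c * (∫ s in (0:ℝ)..(mnorm (msym P)), (δ + s) ^ (p - 2) * s)
            ≤ mdot (Smap p δ P) P ∧
        mdot (Smap p δ P) P
            ≤ C * ∫ s in (0:ℝ)..(mnorm (msym P)), (δ + s) ^ (p - 2) * s := by
  have key : ∀ δ : ℝ, ∀ d : ℕ, ∀ P : Matrix (Fin d) (Fin d) ℝ,
      mdot (Smap p δ P) P = (δ + mnorm (msym P)) ^ (p - 2) * mnorm (msym P) ^ 2 := by
    intro δ d P
    show mdot (((δ + mnorm (msym P)) ^ (p - 2)) • msym P) P = _
    rw [mdot_smul_left, mdot_msym, ← mnorm_sq]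
  constructor
  · intro δ hδ d _ P
    rw [key δ d P, mnorm_sq (Fmap p δ P)]
    show _ = mdot (((δ + mnorm (msym P)) ^ ((p - 2) / 2)) • msym P)
      (((δ + mnorm (msym P)) ^ ((p - 2) / 2)) • msym P)
    rw [mdot_smul_left, mdot_smul_right, ← mnorm_sq]
    have hx : 0 ≤ δ + mnorm (msym P) := by
      have := mnorm_nonneg (msym P); linarith
    have hb : ((δ + mnorm (msym P)) ^ ((p - 2) / 2)) ^ (2:ℕ)
        = (δ + mnorm (msym P)) ^ (p - 2) := by
      rw [← Real.rpow_natCast ((δ + mnorm (msym P)) ^ ((p - 2) / 2)) 2,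
        ← Real.rpow_mul hx]
      push_cast
      rw [div_mul_cancel₀ _ (two_ne_zero)]
    rw [← hb]; ring
  · obtain ⟨c, hc, C, hC, hphi⟩ := phi_key p hp
    refine ⟨c, hc, C, hC, fun δ hδ d _ P => ?_⟩
    rw [key δ d P]
    exact hphi δ hδ (mnorm (msym P)) (mnorm_nonneg _)
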